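/- With A, A_k, G_k, G as in the context: each G_k is Riemann integrable on [0,1]; 0 ≤ G_k(x) ≤ 1 for all x and k; G_k(x) → G(x) for every x ∈ ℝ; and for every function h : ℝ → ℝ with h = G volume-almost everywhere, h is NOT Riemann integrable on [0,1]. In particular, the pointwise limit G of the Riemann integrable functions G_k has no Riemann integrable representative in its a.e.-equivalence class. -/

import Mathlib

open MeasureTheory Filter Topology BoxIntegral

noncomputable def unitBox : BoxIntegral.Box (Fin 1) :=
  ⟨fun _ => 0, fun _ => 1, fun _ => one_pos⟩

/-- `f : ℝ → ℝ` is Riemann integrable on `[0,1]`, in the sense of Mathlib's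
box-integral theory with the Riemann integration parameters. -/
def RiemannIntegrableOn01 (f : ℝ → ℝ) : Prop :=
  BoxIntegral.Integrable unitBox BoxIntegral.IntegrationParams.Riemann
    (fun x => f (x 0)) (volume : Measure (Fin 1 → ℝ)).toBoxAdditive.toSMul

section Helpers
open MeasureTheory Filter Topology BoxIntegral Set

namespace Helper13

lemma coe_box (J : BoxIntegral.Box (Fin 1)) :
    (J : Set (Fin 1 → ℝ)) = (fun x : Fin 1 → ℝ => x 0) ⁻¹' Set.Ioc (J.lower 0) (J.upper 0) := by
  ext x
  simp [BoxIntegral.Box.mem_coe, BoxIntegral.Box.mem_def, Fin.forall_fin_one]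

lemma Icc_box (J : BoxIntegral.Box (Fin 1)) :
    BoxIntegral.Box.Icc J = (fun x : Fin 1 → ℝ => x 0) ⁻¹' Set.Icc (J.lower 0) (J.upper 0) := by
  ext x
  simp only [BoxIntegral.Box.Icc_def, Set.mem_Icc, Set.mem_preimage, Pi.le_def,
    Fin.forall_fin_one]

lemma vol_preimage {s : Set ℝ} (hs : MeasurableSet s) :
    volume ((fun x : Fin 1 → ℝ => x 0) ⁻¹' s) = volume s := by
  have h := (MeasureTheory.volume_preserving_funUnique (Fin 1) ℝ).measure_preimage
    hs.nullMeasurableSet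
  have he : (MeasurableEquiv.funUnique (Fin 1) ℝ) ⁻¹' s = (fun x : Fin 1 → ℝ => x 0) ⁻¹' s := by
    ext x
    have : x default = x 0 := congrArg x (Subsingleton.elim _ _)
    simp [MeasurableEquiv.funUnique, Equiv.funUnique, this]
  rwa [he] at h

lemma vol_preimage_le (s : Set ℝ) :
    volume ((fun x : Fin 1 → ℝ => x 0) ⁻¹' s) ≤ volume s := by
  have hmap := (MeasureTheory.volume_preserving_funUnique (Fin 1) ℝ).map_eq
  have he : (MeasurableEquiv.funUnique (Fin 1) ℝ) ⁻¹' s = (fun x : Fin 1 → ℝ => x 0) ⁻¹' s := by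
    ext x
    have : x default = x 0 := congrArg x (Subsingleton.elim _ _)
    simp [MeasurableEquiv.funUnique, Equiv.funUnique, this]
  calc volume ((fun x : Fin 1 → ℝ => x 0) ⁻¹' s)
      = volume ((MeasurableEquiv.funUnique (Fin 1) ℝ) ⁻¹' s) := by rw [he]
    _ ≤ (volume.map (MeasurableEquiv.funUnique (Fin 1) ℝ)) s :=
        Measure.le_map_apply (MeasurableEquiv.funUnique (Fin 1) ℝ).measurable.aemeasurable s
    _ = volume s := by exact congrArg (fun μ : Measure ℝ => μ s) hmap

lemma vol_box (J : BoxIntegral.Box (Fin 1)) :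
    volume (J : Set (Fin 1 → ℝ)) = ENNReal.ofReal (J.upper 0 - J.lower 0) := by
  rw [coe_box, vol_preimage measurableSet_Ioc, Real.volume_Ioc]

lemma vol_box_lt_top (J : BoxIntegral.Box (Fin 1)) : volume (J : Set (Fin 1 → ℝ)) ≠ ⊤ := by
  rw [vol_box]; exact ENNReal.ofReal_ne_top

/-- Main criterion: the indicator of a measurable set with finite frontier is
Riemann integrable on `[0,1]`. -/
lemma riemann_indicator (S : Set ℝ) (hS : MeasurableSet S) (hF : (frontier S).Finite) :
    RiemannIntegrableOn01 (Set.indicator S fun _ => (1:ℝ)) := by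
  classical
  set T : Set (Fin 1 → ℝ) := (fun x : Fin 1 → ℝ => x 0) ⁻¹' S with hT
  have hTm : MeasurableSet T := hS.preimage (measurable_pi_apply 0)
  set g : ℝ → ℝ := Set.indicator S fun _ => (1:ℝ) with hg
  refine ⟨(volume (T ∩ ↑unitBox)).toReal, hasIntegral_iff.2 fun ε hε => ?_⟩
  set F : Finset ℝ := hF.toFinset with hFdef
  set m : ℕ := F.card with hm
  set δ : ℝ := ε / (4 * m + 4) with hδdef
  have hδ : 0 < δ := div_pos hε (by positivity)
  refine ⟨fun _ _ => ⟨δ, hδ⟩, fun _ _ _ => rfl, fun c π hmem hpart => ?_⟩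
  -- notation
  have hsub := hmem.isSubordinate
  have hHen := hmem.isHenstock rfl
  -- value of the sum
  have hsum : integralSum (fun x => g (x 0))
      (volume : Measure (Fin 1 → ℝ)).toBoxAdditive.toSMul π
      = ∑ J ∈ π.boxes, (volume (J : Set (Fin 1 → ℝ))).toReal * g (π.tag J 0) := by
    simp [integralSum, BoxAdditiveMap.toSMul_apply, Measure.toBoxAdditive_apply, smul_eq_mul]
    refine Finset.sum_congr rfl fun J _ => ?_
    rw [measureReal_def, vol_box, ENNReal.toReal_ofReal (sub_nonneg.2 (J.lower_lt_upper 0).le)]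
  -- the target value as a sum
  have hdisj : (↑π.boxes : Set (BoxIntegral.Box (Fin 1))).PairwiseDisjoint
      (fun J => T ∩ (J : Set (Fin 1 → ℝ))) := fun J hJ K hK hne =>
    ((π.toPrepartition.pairwiseDisjoint hJ hK hne).mono inter_subset_right inter_subset_right)
  have hcover : T ∩ ↑unitBox = ⋃ J ∈ π.boxes, T ∩ (J : Set (Fin 1 → ℝ)) := by
    rw [← inter_iUnion₂, ← BoxIntegral.Prepartition.iUnion_def',
      hpart.iUnion_eq]
  have hmeas : ∀ J ∈ π.boxes, MeasurableSet (T ∩ (J : Set (Fin 1 → ℝ))) :=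
    fun J _ => hTm.inter J.measurableSet_coe
  have hy : (volume (T ∩ ↑unitBox)).toReal
      = ∑ J ∈ π.boxes, (volume (T ∩ (J : Set (Fin 1 → ℝ)))).toReal := by
    rw [hcover, measure_biUnion_finset hdisj hmeas, ENNReal.toReal_sum]
    intro J _
    exact ne_top_of_le_ne_top (vol_box_lt_top J) (measure_mono inter_subset_right)
  rw [hsum, hy, Real.dist_eq, ← Finset.sum_sub_distrib]
  refine le_trans (Finset.abs_sum_le_sum_abs _ _) ?_
  -- bad boxes
  set Bad : Finset (BoxIntegral.Box (Fin 1)) :=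
    π.boxes.filter (fun J => (Set.Icc (J.lower 0) (J.upper 0) ∩ frontier S).Nonempty) with hBad
  have hgood : ∀ J ∈ π.boxes, J ∉ Bad →
      |(volume (J : Set (Fin 1 → ℝ))).toReal * g (π.tag J 0)
        - (volume (T ∩ (J : Set (Fin 1 → ℝ)))).toReal| = 0 := by
    intro J hJ hJB
    have hempty : Set.Icc (J.lower 0) (J.upper 0) ∩ frontier S = ∅ := by
      by_contra hne
      exact hJB (Finset.mem_filter.2 ⟨hJ, nonempty_iff_ne_empty.2 hne⟩)
    have htag : π.tag J 0 ∈ Set.Icc (J.lower 0) (J.upper 0) := by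
      have := hHen J hJ
      rw [Icc_box] at this
      exact this
    have hJsub : (J : Set (Fin 1 → ℝ)) ⊆ (fun x : Fin 1 → ℝ => x 0) ⁻¹'
        Set.Icc (J.lower 0) (J.upper 0) := by
      rw [coe_box]; exact fun x hx => Ioc_subset_Icc_self hx
    have hKconn : IsPreconnected (Set.Icc (J.lower 0) (J.upper 0)) := isPreconnected_Icc
    have hcov : Set.Icc (J.lower 0) (J.upper 0) ⊆ interior S ∪ (closure S)ᶜ := by
      intro x hx
      by_cases hxc : x ∈ closure S
      · by_cases hxi : x ∈ interior S
        · exact Or.inl hxi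
        · have hxf : x ∈ frontier S := ⟨hxc, hxi⟩
          exact absurd (Set.mem_inter hx hxf) (by rw [hempty]; exact notMem_empty x)
      · exact Or.inr hxc
    have hdis : Disjoint (interior S) (closure S)ᶜ :=
      disjoint_compl_right.mono_left (interior_subset.trans subset_closure)
    have hnon : (Set.Icc (J.lower 0) (J.upper 0)).Nonempty :=
      nonempty_Icc.2 (J.lower_lt_upper 0).le
    rcases hKconn.subset_or_subset isOpen_interior (isClosed_closure.isOpen_compl)
        hdis hcov with hsub1 | hsub2
    · have h1 : g (π.tag J 0) = 1 :=
        indicator_of_mem (interior_subset (hsub1 htag)) _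
      have h2 : T ∩ (J : Set (Fin 1 → ℝ)) = (J : Set (Fin 1 → ℝ)) := by
        refine inter_eq_self_of_subset_right fun x hx => ?_
        show x 0 ∈ S
        exact interior_subset (hsub1 (hJsub hx))
      rw [h1, h2, mul_one, sub_self, abs_zero]
    · have h1 : g (π.tag J 0) = 0 := by
        refine indicator_of_notMem (fun hmem' => ?_) _
        exact (hsub2 htag) (subset_closure hmem')
      have h2 : T ∩ (J : Set (Fin 1 → ℝ)) = ∅ := by
        refine eq_empty_of_forall_notMem fun x hx => ?_
        exact (hsub2 (hJsub hx.2)) (subset_closure hx.1)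
      rw [h1, h2, mul_zero, measure_empty, ENNReal.toReal_zero, sub_self, abs_zero]
  have hbadbound : ∀ J ∈ Bad,
      |(volume (J : Set (Fin 1 → ℝ))).toReal * g (π.tag J 0)
        - (volume (T ∩ (J : Set (Fin 1 → ℝ)))).toReal|
      ≤ (volume (J : Set (Fin 1 → ℝ))).toReal := by
    intro J _
    have h0g : 0 ≤ g (π.tag J 0) := indicator_nonneg (fun _ _ => zero_le_one) _
    have h1g : g (π.tag J 0) ≤ 1 := indicator_le_self' (fun _ _ => zero_le_one) _
    have hble : (volume (T ∩ (J : Set (Fin 1 → ℝ)))).toReal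
        ≤ (volume (J : Set (Fin 1 → ℝ))).toReal :=
      ENNReal.toReal_mono (vol_box_lt_top J) (measure_mono inter_subset_right)
    rw [abs_sub_le_iff]
    constructor
    · nlinarith [ENNReal.toReal_nonneg (a := volume (T ∩ (J : Set (Fin 1 → ℝ)))),
        ENNReal.toReal_nonneg (a := volume (J : Set (Fin 1 → ℝ)))]
    · nlinarith [ENNReal.toReal_nonneg (a := volume (J : Set (Fin 1 → ℝ)))]
  -- sum over bad boxes
  have hsplit : ∑ J ∈ π.boxes,
      |(volume (J : Set (Fin 1 → ℝ))).toReal * g (π.tag J 0)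
        - (volume (T ∩ (J : Set (Fin 1 → ℝ)))).toReal|
      ≤ ∑ J ∈ Bad, (volume (J : Set (Fin 1 → ℝ))).toReal := by
    rw [← Finset.sum_filter_add_sum_filter_not π.boxes
      (fun J => (Set.Icc (J.lower 0) (J.upper 0) ∩ frontier S).Nonempty)]
    have h2 : ∑ J ∈ π.boxes.filter
        (fun J => ¬ (Set.Icc (J.lower 0) (J.upper 0) ∩ frontier S).Nonempty),
        |(volume (J : Set (Fin 1 → ℝ))).toReal * g (π.tag J 0)
        - (volume (T ∩ (J : Set (Fin 1 → ℝ)))).toReal| = 0 := by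
      refine Finset.sum_eq_zero fun J hJ => ?_
      rw [Finset.mem_filter] at hJ
      exact hgood J hJ.1 (fun hB => hJ.2 (Finset.mem_filter.1 hB).2)
    rw [h2, add_zero]
    exact Finset.sum_le_sum hbadbound
  refine hsplit.trans ?_
  -- each bad box is contained in a 2δ-ball around a frontier point
  have hbadsub : ∀ J ∈ Bad, ∃ p ∈ F,
      (J : Set (Fin 1 → ℝ)) ⊆ (fun x : Fin 1 → ℝ => x 0) ⁻¹' Set.Icc (p - 2*δ) (p + 2*δ) := by
    intro J hJ
    rw [hBad, Finset.mem_filter] at hJ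
    obtain ⟨hJb, p, hp⟩ := hJ
    refine ⟨p, hFdef ▸ hF.mem_toFinset.2 hp.2, ?_⟩
    have hdiam : ∀ z ∈ Set.Icc (J.lower 0) (J.upper 0), |z - p| ≤ 2*δ := by
      intro z hz
      set X : Fin 1 → ℝ := fun _ => z with hX
      set P : Fin 1 → ℝ := fun _ => p with hP
      have hXmem : X ∈ BoxIntegral.Box.Icc J := by rw [Icc_box]; exact hz
      have hPmem : P ∈ BoxIntegral.Box.Icc J := by rw [Icc_box]; exact hp.1
      have h1 := hsub J hJb hXmem
      have h2 := hsub J hJb hPmem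
      rw [Metric.mem_closedBall] at h1 h2
      have hXP : dist X P ≤ 2*δ := by
        calc dist X P ≤ dist X (π.tag J) + dist P (π.tag J) := dist_triangle_right _ _ _
          _ ≤ δ + δ := add_le_add h1 h2
          _ = 2*δ := by ring
      have := (dist_le_pi_dist X P 0).trans hXP
      rwa [Real.dist_eq] at this
    intro x hx
    rw [coe_box] at hx
    have hx' : x 0 ∈ Set.Icc (J.lower 0) (J.upper 0) := Ioc_subset_Icc_self hx
    have := hdiam (x 0) hx'
    rw [abs_sub_le_iff] at this
    exact ⟨by linarith [this.1], by linarith [this.2]⟩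
  choose! pt hptF hptsub using hbadsub
  have hBdisj : (↑Bad : Set (BoxIntegral.Box (Fin 1))).PairwiseDisjoint
      (fun J => (J : Set (Fin 1 → ℝ))) := by
    intro J hJ K hK hne
    exact π.toPrepartition.pairwiseDisjoint (Finset.mem_filter.1 hJ).1
      (Finset.mem_filter.1 hK).1 hne
  have hsum2 : ∑ J ∈ Bad, volume (J : Set (Fin 1 → ℝ))
      = volume (⋃ J ∈ Bad, (J : Set (Fin 1 → ℝ))) :=
    (measure_biUnion_finset hBdisj (fun J _ => J.measurableSet_coe)).symm
  have hUsub : (⋃ J ∈ Bad, (J : Set (Fin 1 → ℝ)))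
      ⊆ ⋃ p ∈ F, (fun x : Fin 1 → ℝ => x 0) ⁻¹' Set.Icc (p - 2*δ) (p + 2*δ) := by
    refine iUnion₂_subset fun J hJ => ?_
    exact (hptsub J hJ).trans (Set.subset_iUnion₂
      (s := fun p (_ : p ∈ F) => (fun x : Fin 1 → ℝ => x 0) ⁻¹' Set.Icc (p - 2*δ) (p + 2*δ))
      (pt J) (hptF J hJ))
  have hvol2 : volume (⋃ p ∈ F, (fun x : Fin 1 → ℝ => x 0) ⁻¹' Set.Icc (p - 2*δ) (p + 2*δ))
      ≤ ∑ p ∈ F, ENNReal.ofReal (4*δ) := by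
    refine (measure_biUnion_finset_le F _).trans ?_
    refine Finset.sum_le_sum fun p _ => ?_
    rw [vol_preimage measurableSet_Icc, Real.volume_Icc]
    exact le_of_eq (by congr 1; ring)
  have : ∑ J ∈ Bad, (volume (J : Set (Fin 1 → ℝ))).toReal
      = (∑ J ∈ Bad, volume (J : Set (Fin 1 → ℝ))).toReal := by
    rw [ENNReal.toReal_sum]
    intro J _; exact vol_box_lt_top J
  rw [this]
  have hle : (∑ J ∈ Bad, volume (J : Set (Fin 1 → ℝ))).toReal
      ≤ ((m : ENNReal) * ENNReal.ofReal (4*δ)).toReal := by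
    refine ENNReal.toReal_mono (by simp [ENNReal.mul_ne_top]) ?_
    rw [hsum2]
    refine (measure_mono hUsub).trans (hvol2.trans ?_)
    rw [Finset.sum_const, hm, nsmul_eq_mul]
  refine hle.trans ?_
  rw [ENNReal.toReal_mul, ENNReal.toReal_ofReal (by positivity)]
  simp only [ENNReal.toReal_natCast]
  have h4 : (0:ℝ) < 4 * m + 4 := by positivity
  calc (m:ℝ) * (4 * δ) = (4*(m:ℝ)) * δ := by ring
    _ ≤ (4*(m:ℝ)+4) * δ := by nlinarith
    _ = ε := by rw [hδdef]; field_simp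

end Helper13
end Helpers

section Rest
open MeasureTheory Filter Topology BoxIntegral Set
namespace Helper13b

lemma finite_frontier_biUnion (t : ℕ → Set ℝ) (ht : ∀ j, (frontier (t j)).Finite)
    (s : Finset ℕ) : (frontier (⋃ j ∈ s, t j)).Finite := by
  classical
  induction s using Finset.induction_on with
  | empty => simp
  | @insert a s h ih =>
      rw [Finset.set_biUnion_insert]
      refine Set.Finite.subset ((ht a).union ih) ?_
      exact (frontier_union_subset _ _).trans
        (Set.union_subset_union Set.inter_subset_left Set.inter_subset_right)

lemma finite_frontier_interval (a b : ℝ) :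
    (frontier (Set.Icc (0:ℝ) 1 ∩ Set.Ioo a b)).Finite := by
  have h1 : (frontier (Set.Icc (0:ℝ) 1)).Finite := by
    rw [frontier_Icc (by norm_num : (0:ℝ) ≤ 1)]
    exact (Set.finite_singleton _).insert _
  have h2 : (frontier (Set.Ioo a b)).Finite := by
    rcases lt_or_ge a b with hab | hab
    · rw [frontier_Ioo hab]; exact (Set.finite_singleton _).insert _
    · rw [Set.Ioo_eq_empty (not_lt.2 hab), frontier_empty]; exact Set.finite_empty
  refine Set.Finite.subset (h1.union h2) ?_
  refine (frontier_inter_subset _ _).trans ?_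
  exact Set.union_subset_union Set.inter_subset_left Set.inter_subset_right

end Helper13b
end Rest

section Main
open MeasureTheory Filter Topology BoxIntegral Set

theorem stmt13 (q : ℕ → ℝ)
    (hq : Set.BijOn q {n : ℕ | 1 ≤ n} (Set.Icc (0:ℝ) 1 ∩ Set.range ((↑) : ℚ → ℝ)))
    (ℓ : ℝ) (hℓ : ℓ ∈ Set.Ioo (0:ℝ) 1)
    (I : ℕ → Set ℝ)
    (hI : ∀ j, I j = Set.Icc (0:ℝ) 1 ∩ Set.Ioo (q j - ℓ / 2 ^ (j + 1)) (q j + ℓ / 2 ^ (j + 1)))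
    (Ak : ℕ → Set ℝ) (hAk : ∀ k, Ak k = ⋃ j ∈ Set.Icc 1 k, I j)
    (A : Set ℝ) (hA : A = ⋃ j ∈ {j : ℕ | 1 ≤ j}, I j)
    (Gk : ℕ → ℝ → ℝ) (hGk : ∀ k, Gk k = Set.indicator (Ak k) (fun _ => (1:ℝ)))
    (G : ℝ → ℝ) (hG : G = Set.indicator A (fun _ => (1:ℝ))) :
    (∀ k, RiemannIntegrableOn01 (Gk k)) ∧
    (∀ k x, 0 ≤ Gk k x ∧ Gk k x ≤ 1) ∧
    (∀ x, Tendsto (fun k => Gk k x) atTop (𝓝 (G x))) ∧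
    (∀ h : ℝ → ℝ, h =ᵐ[volume] G → ¬ RiemannIntegrableOn01 h) := by
  classical
  have hd : ∀ j : ℕ, (0:ℝ) < ℓ / 2 ^ (j + 1) := fun j => div_pos hℓ.1 (by positivity)
  -- measure of A
  have hAmeas : volume A ≤ ENNReal.ofReal ℓ := by
    have hA' : A = ⋃ n : ℕ, I (n + 1) := by
      rw [hA]; ext x
      simp only [Set.mem_iUnion, Set.mem_setOf_eq]
      constructor
      · rintro ⟨j, hj, hx⟩
        exact ⟨j - 1, by rwa [Nat.sub_add_cancel hj]⟩
      · rintro ⟨n, hx⟩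
        exact ⟨n + 1, Nat.succ_le_succ (Nat.zero_le n), hx⟩
    have hIle : ∀ n : ℕ, volume (I (n + 1)) ≤ ENNReal.ofReal (ℓ / 2 ^ (n + 1)) := by
      intro n
      rw [hI]
      refine (measure_mono Set.inter_subset_right).trans ?_
      rw [Real.volume_Ioo]
      refine le_of_eq ?_
      congr 1
      have h2 : (2:ℝ) ^ (n + 1 + 1) = 2 ^ (n + 1) * 2 := by rw [pow_succ]
      rw [h2]
      field_simp
      ring
    calc volume A ≤ ∑' n : ℕ, volume (I (n + 1)) := by rw [hA']; exact measure_iUnion_le _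
      _ ≤ ∑' n : ℕ, ENNReal.ofReal (ℓ / 2 ^ (n + 1)) := ENNReal.tsum_le_tsum hIle
      _ = ENNReal.ofReal ℓ := by
          have h1 : ∀ n : ℕ, ENNReal.ofReal (ℓ / 2 ^ (n + 1))
              = ENNReal.ofReal ℓ * (2⁻¹ : ENNReal) ^ (n + 1) := by
            intro n
            rw [show ℓ / 2 ^ (n + 1) = ℓ * ((2:ℝ)⁻¹) ^ (n + 1) by
              rw [inv_pow]; ring]
            rw [ENNReal.ofReal_mul hℓ.1.le, ENNReal.ofReal_pow (by norm_num)]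
            congr 2
            rw [ENNReal.ofReal_inv_of_pos (by norm_num : (0:ℝ) < 2)]
            norm_num
          simp_rw [h1]
          rw [ENNReal.tsum_mul_left]
          have h2 : ∑' n : ℕ, (2⁻¹ : ENNReal) ^ (n + 1) = 1 := by
            have := ENNReal.tsum_geometric (2⁻¹ : ENNReal)
            calc ∑' n : ℕ, (2⁻¹ : ENNReal) ^ (n + 1)
                = ∑' n : ℕ, (2⁻¹ : ENNReal) ^ n * 2⁻¹ := by
                  congr 1; funext n; rw [pow_succ]
              _ = (∑' n : ℕ, (2⁻¹ : ENNReal) ^ n) * 2⁻¹ := ENNReal.tsum_mul_right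
              _ = (1 - 2⁻¹)⁻¹ * 2⁻¹ := by rw [this]
              _ = 1 := by
                  rw [ENNReal.one_sub_inv_two, inv_inv]
                  exact ENNReal.mul_inv_cancel (by norm_num) (by norm_num)
          rw [h2, mul_one]
  -- A is contained in [0,1]
  have hIsub : ∀ j, I j ⊆ Set.Icc (0:ℝ) 1 := fun j => by rw [hI]; exact Set.inter_subset_left
  have hAksub : ∀ k, Ak k ⊆ A := by
    intro k
    rw [hAk, hA]
    exact Set.iUnion₂_subset fun j hj => Set.subset_iUnion₂ (s := fun j (_ : j ∈ {j : ℕ | 1 ≤ j}) => I j) j hj.1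
  -- Part 1
  have part1 : ∀ k, RiemannIntegrableOn01 (Gk k) := by
    intro k
    rw [hGk]
    have hmeas : MeasurableSet (Ak k) := by
      rw [hAk]
      refine MeasurableSet.biUnion (Set.to_countable _) fun j _ => ?_
      rw [hI]; exact measurableSet_Icc.inter measurableSet_Ioo
    have hfin : (frontier (Ak k)).Finite := by
      have heq : Ak k = ⋃ j ∈ (Finset.Icc 1 k : Finset ℕ), I j := by
        rw [hAk]; ext x; simp [Finset.mem_Icc, Set.mem_Icc]
      rw [heq]
      refine Helper13b.finite_frontier_biUnion I (fun j => ?_) _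
      rw [hI]
      exact Helper13b.finite_frontier_interval _ _
    exact Helper13.riemann_indicator _ hmeas hfin
  -- Part 2
  have part2 : ∀ k x, 0 ≤ Gk k x ∧ Gk k x ≤ 1 := by
    intro k x
    rw [hGk]
    constructor
    · exact Set.indicator_nonneg (fun _ _ => zero_le_one) _
    · exact Set.indicator_le_self' (fun _ _ => zero_le_one) _
  -- Part 3
  have part3 : ∀ x, Tendsto (fun k => Gk k x) atTop (𝓝 (G x)) := by
    intro x
    by_cases hx : x ∈ A
    · have h1 : G x = 1 := by rw [hG, Set.indicator_of_mem hx]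
      rw [hA] at hx
      rw [Set.mem_iUnion₂] at hx
      obtain ⟨j, hj, hxI⟩ := hx
      have hev : ∀ k ≥ j, Gk k x = 1 := by
        intro k hk
        rw [hGk]
        refine Set.indicator_of_mem ?_ _
        rw [hAk]
        exact Set.mem_biUnion ⟨hj, hk⟩ hxI
      rw [h1]
      refine tendsto_atTop_of_eventually_const (i₀ := j) hev
    · have h1 : G x = 0 := by rw [hG, Set.indicator_of_notMem hx]
      have hev : ∀ k, Gk k x = 0 := fun k => by
        rw [hGk]
        exact Set.indicator_of_notMem (fun hxk => hx (hAksub k hxk)) _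
      rw [h1]
      simpa [hev] using tendsto_const_nhds (x := (0:ℝ)) (f := atTop (α := ℕ))
  -- Part 4
  refine ⟨part1, part2, part3, ?_⟩
  intro h hae hInt
  set N : Set ℝ := {x | ¬ h x = G x} with hNdef
  have hN : volume N = 0 := ae_iff.1 hae
  have hGval : ∀ x, x ∉ N → h x = G x := fun x hx => not_not.1 (fun hne => hx hne)
  set ε : ℝ := (1 - ℓ) / 3 with hεdef
  have hε : 0 < ε := by rw [hεdef]; linarith [hℓ.2]
  set r : (Fin 1 → ℝ) → Set.Ioi (0:ℝ) := hInt.convergenceR ε 1 with hrdef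
  have hrc : ∀ x, r x = r 0 := hInt.convergenceR_cond ε 1 rfl
  set δ : ℝ := (r 0 : ℝ) / 2 with hδdef
  have hδ : 0 < δ := half_pos (r 0).2
  obtain ⟨π, hpart, hHen, hsub, -, -⟩ :=
    BoxIntegral.Box.exists_taggedPartition_isHenstock_isSubordinate_homothetic unitBox
      (fun _ => ⟨δ, hδ⟩)
  -- bounds of boxes
  have hbox : ∀ J ∈ π.boxes, (0:ℝ) ≤ J.lower 0 ∧ J.upper 0 ≤ 1 := by
    intro J hJ
    have hle := π.toPrepartition.le_of_mem hJ
    rw [BoxIntegral.Box.le_iff_bounds] at hle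
    exact ⟨hle.1 0, hle.2 0⟩
  -- condition 1 : a point of A (minus N) inside the box
  set cond1 : BoxIntegral.Box (Fin 1) → Prop := fun J => ∃ x : ℝ,
    x ∈ Set.Icc (J.lower 0) (J.upper 0) ∧ x ∈ Set.Icc (0:ℝ) 1 ∧ x ∈ A ∧ x ∉ N with hcond1
  set cond2 : BoxIntegral.Box (Fin 1) → Prop := fun J => ∃ x : ℝ,
    x ∈ Set.Icc (J.lower 0) (J.upper 0) ∧ x ∈ Set.Icc (0:ℝ) 1 ∧ x ∉ A ∧ x ∉ N with hcond2
  have key : ∀ J ∈ π.boxes, cond1 J := by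
    intro J hJ
    obtain ⟨h0, h1⟩ := hbox J hJ
    have hlu : J.lower 0 < J.upper 0 := J.lower_lt_upper 0
    obtain ⟨rq, hrq1, hrq2⟩ := exists_rat_btwn hlu
    have hrqIcc : (rq:ℝ) ∈ Set.Icc (0:ℝ) 1 ∩ Set.range ((↑) : ℚ → ℝ) :=
      ⟨⟨le_of_lt (lt_of_le_of_lt h0 hrq1), le_of_lt (lt_of_lt_of_le hrq2 h1)⟩, ⟨rq, rfl⟩⟩
    obtain ⟨j, hj, hjq⟩ := hq.surjOn hrqIcc
    set d : ℝ := ℓ / 2 ^ (j + 1) with hddef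
    set O : Set ℝ := Set.Ioo (max (J.lower 0) (q j - d)) (min (J.upper 0) (q j + d)) with hO
    have hqO : q j ∈ O := by
      refine ⟨max_lt (hjq ▸ hrq1) (by linarith [hd j]), lt_min (hjq ▸ hrq2) (by linarith [hd j])⟩
    have hpos : 0 < volume O := by
      rw [hO, Real.volume_Ioo]
      refine ENNReal.ofReal_pos.2 ?_
      have := hqO
      rw [hO, Set.mem_Ioo] at this
      linarith [this.1, this.2]
    have hdiff : volume (O \ N) = volume O := measure_diff_null hN
    obtain ⟨x, hxO, hxN⟩ := nonempty_of_measure_ne_zero (by rw [hdiff]; exact hpos.ne')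
    have hx1 : J.lower 0 < x := lt_of_le_of_lt (le_max_left _ _) hxO.1
    have hx2 : x < J.upper 0 := lt_of_lt_of_le hxO.2 (min_le_left _ _)
    have hxIcc : x ∈ Set.Icc (0:ℝ) 1 := ⟨le_of_lt (lt_of_le_of_lt h0 hx1),
      le_of_lt (lt_of_lt_of_le hx2 h1)⟩
    have hxA : x ∈ A := by
      rw [hA]
      refine Set.mem_biUnion hj ?_
      rw [hI]
      exact ⟨hxIcc, lt_of_le_of_lt (le_max_right _ _) hxO.1,
        lt_of_lt_of_le hxO.2 (min_le_right _ _)⟩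
    exact ⟨x, ⟨hx1.le, hx2.le⟩, hxIcc, hxA, hxN⟩
  -- picks
  set pick1 : BoxIntegral.Box (Fin 1) → ℝ :=
    fun J => if hc : cond1 J then hc.choose else 0 with hpick1def
  set pick2 : BoxIntegral.Box (Fin 1) → ℝ :=
    fun J => if hc : cond2 J then hc.choose else pick1 J with hpick2def
  have hpick1 : ∀ J, cond1 J → pick1 J ∈ Set.Icc (J.lower 0) (J.upper 0) ∧
      pick1 J ∈ Set.Icc (0:ℝ) 1 ∧ pick1 J ∈ A ∧ pick1 J ∉ N := by
    intro J hc
    rw [hpick1def]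
    simp only [dif_pos hc]
    exact hc.choose_spec
  have hpick1mem : ∀ J, pick1 J ∈ Set.Icc (0:ℝ) 1 := by
    intro J
    by_cases hc : cond1 J
    · exact (hpick1 J hc).2.1
    · rw [hpick1def]; simp only [dif_neg hc]; exact ⟨le_refl 0, zero_le_one⟩
  have hpick2 : ∀ J, cond2 J → pick2 J ∈ Set.Icc (J.lower 0) (J.upper 0) ∧
      pick2 J ∈ Set.Icc (0:ℝ) 1 ∧ pick2 J ∉ A ∧ pick2 J ∉ N := by
    intro J hc
    rw [hpick2def]
    simp only [dif_pos hc]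
    exact hc.choose_spec
  have hpick2neg : ∀ J, ¬ cond2 J → pick2 J = pick1 J := by
    intro J hc
    rw [hpick2def]; simp only [dif_neg hc]
  have hpick2mem : ∀ J, pick2 J ∈ Set.Icc (0:ℝ) 1 := by
    intro J
    by_cases hc : cond2 J
    · exact (hpick2 J hc).2.1
    · rw [hpick2neg J hc]; exact hpick1mem J
  -- tagged prepartitions
  have hmemIcc1 : ∀ J, (fun _ : Fin 1 => pick1 J) ∈ BoxIntegral.Box.Icc unitBox := by
    intro J
    rw [Helper13.Icc_box]
    exact hpick1mem J
  have hmemIcc2 : ∀ J, (fun _ : Fin 1 => pick2 J) ∈ BoxIntegral.Box.Icc unitBox := by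
    intro J
    rw [Helper13.Icc_box]
    exact hpick2mem J
  set π₁ : BoxIntegral.TaggedPrepartition unitBox :=
    ⟨π.toPrepartition, fun J => fun _ => pick1 J, hmemIcc1⟩ with hπ₁
  set π₂ : BoxIntegral.TaggedPrepartition unitBox :=
    ⟨π.toPrepartition, fun J => fun _ => pick2 J, hmemIcc2⟩ with hπ₂
  -- tags in their boxes
  have htag1in : ∀ J ∈ π.boxes, (fun _ : Fin 1 => pick1 J) ∈ BoxIntegral.Box.Icc J := by
    intro J hJ
    rw [Helper13.Icc_box]
    exact (hpick1 J (key J hJ)).1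
  have htag2in : ∀ J ∈ π.boxes, (fun _ : Fin 1 => pick2 J) ∈ BoxIntegral.Box.Icc J := by
    intro J hJ
    by_cases hc : cond2 J
    · rw [Helper13.Icc_box]; exact (hpick2 J hc).1
    · rw [hpick2neg J hc]; exact htag1in J hJ
  -- subordination
  have hr0 : ((r 0 : ℝ)) = 2 * δ := by rw [hδdef]; ring
  have hsubord : ∀ (tg : BoxIntegral.Box (Fin 1) → Fin 1 → ℝ),
      (∀ J ∈ π.boxes, tg J ∈ BoxIntegral.Box.Icc J) →
      ∀ J ∈ π.boxes, BoxIntegral.Box.Icc J ⊆ Metric.closedBall (tg J) (r (tg J)) := by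
    intro tg htg J hJ y hy
    have h1 : dist y (π.tag J) ≤ δ := hsub J hJ hy
    have h2 : dist (tg J) (π.tag J) ≤ δ := hsub J hJ (htg J hJ)
    have : (r (tg J) : ℝ) = r 0 := by rw [hrc (tg J)]
    rw [Metric.mem_closedBall, this, hr0]
    calc dist y (tg J) ≤ dist y (π.tag J) + dist (tg J) (π.tag J) := dist_triangle_right _ _ _
      _ ≤ δ + δ := add_le_add h1 h2
      _ = 2 * δ := by ring
  have hfalse : ∀ (p : Prop), IntegrationParams.Riemann.bDistortion = true → p := by
    intro p hb
    exact absurd hb (by decide)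
  have hmem1 : IntegrationParams.Riemann.MemBaseSet unitBox 1 r π₁ :=
    ⟨hsubord _ htag1in, fun _ => htag1in, fun hb => (hfalse _ hb), fun hb => (hfalse _ hb)⟩
  have hmem2 : IntegrationParams.Riemann.MemBaseSet unitBox 1 r π₂ :=
    ⟨hsubord _ htag2in, fun _ => htag2in, fun hb => (hfalse _ hb), fun hb => (hfalse _ hb)⟩
  have hdist := hInt.dist_integralSum_le_of_memBaseSet hε hε hmem1 hmem2 rfl
  -- compute the two sums
  set vol : BoxIntegral.BoxAdditiveMap (Fin 1) (ℝ →L[ℝ] ℝ) ⊤ := (volume : Measure (Fin 1 → ℝ)).toBoxAdditive.toSMul with hvol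
  have hS1' : integralSum (fun x => h (x 0)) vol π₁
      = ∑ J ∈ π.boxes, (volume (J : Set (Fin 1 → ℝ))).toReal * h (pick1 J) := by
    simp only [integralSum, BoxIntegral.BoxAdditiveMap.toSMul_apply,
      MeasureTheory.Measure.toBoxAdditive_apply, smul_eq_mul]
    rfl
  have hS1 : integralSum (fun x => h (x 0)) vol π₁ = 1 := by
    rw [hS1']
    have hval : ∀ J ∈ π.boxes, (volume (J : Set (Fin 1 → ℝ))).toReal * h (pick1 J)
        = (volume (J : Set (Fin 1 → ℝ))).toReal := by
      intro J hJ
      obtain ⟨-, -, hA1, hN1⟩ := hpick1 J (key J hJ)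
      rw [hGval _ hN1, hG, Set.indicator_of_mem hA1, mul_one]
    rw [Finset.sum_congr rfl hval]
    have hsum : ∑ J ∈ π.boxes, volume (J : Set (Fin 1 → ℝ)) = volume (↑unitBox : Set (Fin 1 → ℝ)) := by
      rw [← measure_biUnion_finset (fun J hJ K hK hne =>
          π.toPrepartition.pairwiseDisjoint hJ hK hne) (fun J _ => J.measurableSet_coe)]
      congr 1
      rw [← BoxIntegral.Prepartition.iUnion_def']
      exact hpart.iUnion_eq
    have : ∑ J ∈ π.boxes, (volume (J : Set (Fin 1 → ℝ))).toReal
        = (∑ J ∈ π.boxes, volume (J : Set (Fin 1 → ℝ))).toReal := by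
      rw [ENNReal.toReal_sum]
      intro J _; exact Helper13.vol_box_lt_top J
    rw [this, hsum, Helper13.vol_box]
    norm_num [unitBox]
  have hS2' : integralSum (fun x => h (x 0)) vol π₂
      = ∑ J ∈ π.boxes, (volume (J : Set (Fin 1 → ℝ))).toReal * h (pick2 J) := by
    simp only [integralSum, BoxIntegral.BoxAdditiveMap.toSMul_apply,
      MeasureTheory.Measure.toBoxAdditive_apply, smul_eq_mul]
    rfl
  set B : Finset (BoxIntegral.Box (Fin 1)) := π.boxes.filter (fun J => ¬ cond2 J) with hB
  have hS2 : integralSum (fun x => h (x 0)) vol π₂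
      = ∑ J ∈ B, (volume (J : Set (Fin 1 → ℝ))).toReal := by
    rw [hS2']
    have hval : ∀ J ∈ π.boxes, (volume (J : Set (Fin 1 → ℝ))).toReal * h (pick2 J)
        = if ¬ cond2 J then (volume (J : Set (Fin 1 → ℝ))).toReal else 0 := by
      intro J hJ
      by_cases hc : cond2 J
      · obtain ⟨-, -, hA2, hN2⟩ := hpick2 J hc
        rw [hGval _ hN2, hG, Set.indicator_of_notMem hA2, mul_zero, if_neg (not_not.2 hc)]
      · rw [hpick2neg J hc]
        obtain ⟨-, -, hA1, hN1⟩ := hpick1 J (key J hJ)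
        rw [hGval _ hN1, hG, Set.indicator_of_mem hA1, mul_one, if_pos hc]
    rw [Finset.sum_congr rfl hval, Finset.sum_ite, Finset.sum_const_zero, add_zero]
  -- bound the second sum
  have hBsub : ∀ J ∈ B, (J : Set (Fin 1 → ℝ)) ⊆
      (fun x : Fin 1 → ℝ => x 0) ⁻¹' (A ∪ N) := by
    intro J hJ x hx
    rw [hB, Finset.mem_filter] at hJ
    obtain ⟨hJb, hc⟩ := hJ
    rw [Helper13.coe_box] at hx
    have hxIcc : x 0 ∈ Set.Icc (J.lower 0) (J.upper 0) := Set.Ioc_subset_Icc_self hx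
    obtain ⟨h0, h1⟩ := hbox J hJb
    have hx01 : x 0 ∈ Set.Icc (0:ℝ) 1 := ⟨le_trans h0 hxIcc.1, le_trans hxIcc.2 h1⟩
    by_cases hxA : x 0 ∈ A
    · exact Or.inl hxA
    by_cases hxN : x 0 ∈ N
    · exact Or.inr hxN
    exact absurd ⟨x 0, hxIcc, hx01, hxA, hxN⟩ hc
  have hBdisj : (↑B : Set (BoxIntegral.Box (Fin 1))).PairwiseDisjoint
      (fun J => (J : Set (Fin 1 → ℝ))) := by
    intro J hJ K hK hne
    exact π.toPrepartition.pairwiseDisjoint (Finset.mem_filter.1 hJ).1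
      (Finset.mem_filter.1 hK).1 hne
  have hBsum : ∑ J ∈ B, volume (J : Set (Fin 1 → ℝ)) ≤ ENNReal.ofReal ℓ := by
    rw [measure_biUnion_finset hBdisj (fun J _ => J.measurableSet_coe) |>.symm]
    calc volume (⋃ J ∈ B, (J : Set (Fin 1 → ℝ)))
        ≤ volume ((fun x : Fin 1 → ℝ => x 0) ⁻¹' (A ∪ N)) :=
          measure_mono (Set.iUnion₂_subset hBsub)
      _ ≤ volume (A ∪ N) := Helper13.vol_preimage_le _
      _ ≤ volume A + volume N := measure_union_le _ _
      _ = volume A := by rw [hN, add_zero]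
      _ ≤ ENNReal.ofReal ℓ := hAmeas
  have hS2le : integralSum (fun x => h (x 0)) vol π₂ ≤ ℓ := by
    rw [hS2]
    have : ∑ J ∈ B, (volume (J : Set (Fin 1 → ℝ))).toReal
        = (∑ J ∈ B, volume (J : Set (Fin 1 → ℝ))).toReal := by
      rw [ENNReal.toReal_sum]; intro J _; exact Helper13.vol_box_lt_top J
    rw [this]
    calc (∑ J ∈ B, volume (J : Set (Fin 1 → ℝ))).toReal
        ≤ (ENNReal.ofReal ℓ).toReal := ENNReal.toReal_mono ENNReal.ofReal_ne_top hBsum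
      _ = ℓ := ENNReal.toReal_ofReal hℓ.1.le
  have hS2pos : 0 ≤ integralSum (fun x => h (x 0)) vol π₂ := by
    rw [hS2]
    exact Finset.sum_nonneg fun J _ => ENNReal.toReal_nonneg
  rw [hS1, Real.dist_eq] at hdist
  have habs : 1 - ℓ ≤ |1 - integralSum (fun x => h (x 0)) vol π₂| := by
    rw [abs_of_nonneg (by linarith [hS2le, hℓ.2])]
    linarith [hS2le]
  rw [hεdef] at hdist
  linarith [habs.trans hdist]

end Main
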